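/- Let n ≥ 2 be an integer and let ρ_s, ρ_m, δ, P, q_A, q_B be real numbers with ρ_s, ρ_m, δ ≥ 0, q_A ≥ 0, q_B ≥ 0, q_A + q_B = 1, 1 − δ ≤ P ≤ 1, and ρ_s + ρ_m·q_B = (n−1)·P/n. Define α = 1/n − ρ_s/(n−1) and β = (ρ_s + ρ_m)/(n−1) − 1/n, and assume α > 0, β > 0, and β ≥ 2δ. Then q_A ≤ 2β/(α + β) and q_B ≤ α/(α + β). -/

import Mathlib

/-- Lemma 6.8 of the paper (general `n`): bounds on the stationary probabilities `q_A`, `q_B`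
that a short server's work is above or below the CARD threshold, given the work balance
identity `ρ_s + ρ_m q_B = (n−1)P/n` with `P ∈ [1−δ, 1]` and `β ≥ 2δ`. -/
theorem stmt9 (n : ℕ) (hn : 2 ≤ n)
    (ρs ρm δ P qA qB : ℝ)
    (hρs : 0 ≤ ρs) (hρm : 0 ≤ ρm) (hδ : 0 ≤ δ)
    (hqA : 0 ≤ qA) (hqB : 0 ≤ qB) (hsum : qA + qB = 1)
    (hP1 : 1 - δ ≤ P) (hP2 : P ≤ 1)
    (hbal : ρs + ρm * qB = ((n : ℝ) - 1) * P / n)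
    (α β : ℝ)
    (hα : α = 1 / (n : ℝ) - ρs / ((n : ℝ) - 1))
    (hβ : β = (ρs + ρm) / ((n : ℝ) - 1) - 1 / (n : ℝ))
    (hαpos : 0 < α) (hβpos : 0 < β) (hβδ : 2 * δ ≤ β) :
    qA ≤ 2 * β / (α + β) ∧ qB ≤ α / (α + β) := by
  have hN2 : (2 : ℝ) ≤ (n : ℝ) := by exact_mod_cast hn
  have hNpos : (0 : ℝ) < (n : ℝ) := by linarith
  have hN1pos : (0 : ℝ) < (n : ℝ) - 1 := by linarith
  have hab : α + β = ρm / ((n : ℝ) - 1) := by rw [hα, hβ]; ring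
  have hkey : (α + β) * qB = α - (1 - P) / n := by
    have hbal' : (ρs + ρm * qB) * n = ((n : ℝ) - 1) * P := by
      rw [hbal]; field_simp
    rw [hab, hα]
    field_simp
    linear_combination hbal'
  have habpos : 0 < α + β := by linarith
  have hPn : 0 ≤ (1 - P) / n := div_nonneg (by linarith) hNpos.le
  have hPδ : (1 - P) / n ≤ δ := by
    have h1 : (1 - P) / n ≤ 1 - P := div_le_self (by linarith) (by linarith)
    linarith
  constructor
  · rw [le_div_iff₀ habpos]
    nlinarith [hkey]
  · rw [le_div_iff₀ habpos]
    nlinarith [hkey]
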